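/- Let G be a k-connected finite simple graph with independence number α(G) ≤ k + 2, let P be a longest path in G, and let H be a connected component of G − V(P). Then H is a complete graph (its vertices are pairwise adjacent in G) and the set of attachment points of H on P has size exactly k. -/

import Mathlib

open SimpleGraph

/-- `p` is a longest path in the graph `G`. -/
def IsLongestPath {V : Type} (G : SimpleGraph V) {u v : V} (p : G.Walk u v) : Prop :=
  p.IsPath ∧ ∀ (a b : V) (q : G.Walk a b), q.IsPath → q.length ≤ p.length

/-- `G` is `k`-connected: it has at least `k` vertices and deleting any set of fewer
than `k` vertices leaves a connected graph. -/
def KConnected {V : Type} [Fintype V] (k : ℕ) (G : SimpleGraph V) : Prop :=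
  k ≤ Fintype.card V ∧
    ∀ S : Finset V, S.card < k → (G.induce ((↑S : Set V)ᶜ)).Connected

/-- The attachment points on `p` of the component `C` of `G - V(p)`: the vertices of
`p` having a neighbor in `C`. -/
def attachPoints {V : Type} (G : SimpleGraph V) {x y : V} (p : G.Walk x y)
    (C : (G.induce {v : V | v ∉ p.support}).ConnectedComponent) : Set V :=
  {s : V | s ∈ p.support ∧ ∃ h : {v : V | v ∉ p.support},
    (G.induce {v : V | v ∉ p.support}).connectedComponentMk h = C ∧ G.Adj ↑h s}

set_option linter.unusedSectionVars false in
lemma LPaux_prefix_eq_of_getLast_mem {α} {l1 l2 : List α} (hpre : l1 <+: l2) (hnd : l2.Nodup)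
    (hne : l2 ≠ []) (ha : l2.getLast hne ∈ l1) : l1 = l2 := by
  obtain ⟨tl, rfl⟩ := hpre
  cases tl with
  | nil => simp
  | cons c tl' =>
    exfalso
    have hg : (l1 ++ c :: tl').getLast hne = (c :: tl').getLast (by simp) := by
      rw [List.getLast_append]
      simp
    have hmem : (l1 ++ c :: tl').getLast hne ∈ c :: tl' := hg ▸ List.getLast_mem _
    exact List.disjoint_of_nodup_append hnd ha hmem

section LPaux
open SimpleGraph Walk
set_option linter.unusedSectionVars false
variable {V : Type} [DecidableEq V] {G : SimpleGraph V} {x y s : V} {p : G.Walk x y}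

lemma LPaux_dart_eq_of_fst_eq (hp : p.IsPath) {d1 d2 : G.Dart} (h1 : d1 ∈ p.darts)
    (h2 : d2 ∈ p.darts) (hf : d1.fst = d2.fst) : d1 = d2 := by
  have hnd : (p.darts.map (·.fst)).Nodup := by
    rw [Walk.map_fst_darts]
    exact hp.support_nodup.sublist (List.dropLast_sublist _)
  exact List.inj_on_of_nodup_map hnd h1 h2 hf

lemma LPaux_dart_eq_of_snd_eq (hp : p.IsPath) {d1 d2 : G.Dart} (h1 : d1 ∈ p.darts)
    (h2 : d2 ∈ p.darts) (hf : d1.snd = d2.snd) : d1 = d2 := by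
  have hnd : (p.darts.map (·.snd)).Nodup := by
    rw [Walk.map_snd_darts]
    exact hp.support_nodup.sublist (List.tail_sublist _)
  exact List.inj_on_of_nodup_map hnd h1 h2 hf

lemma LPaux_firstDart_mem_darts {u v : V} (w : G.Walk u v) (h : ¬w.Nil) :
    w.firstDart h ∈ w.darts := by
  cases w with
  | nil => simp at h
  | cons a q =>
    rw [Walk.darts_cons, List.mem_cons]
    exact Or.inl (by ext <;> simp [Walk.firstDart])

lemma LPaux_exists_first_dart (hs : s ∈ p.support) (hsy : s ≠ y) :
    ∃ d ∈ p.darts, d.fst = s ∧ d.snd = (p.dropUntil s hs).getVert 1 := by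
  have hnil : ¬(p.dropUntil s hs).Nil := Walk.not_nil_of_ne hsy
  exact ⟨(p.dropUntil s hs).firstDart hnil,
    Walk.darts_dropUntil_subset p hs (LPaux_firstDart_mem_darts _ hnil), rfl, rfl⟩

lemma LPaux_darts_tail_subset {u v : V} (w : G.Walk u v) (h : ¬w.Nil) :
    w.tail.darts ⊆ w.darts := by
  intro d hd
  rw [← Walk.cons_tail_eq w h, Walk.darts_cons]
  exact List.mem_cons_of_mem _ hd

lemma LPaux_notAdjStart (hp : IsLongestPath G p) {h : V} (hh : h ∉ p.support)
    (ha : G.Adj h x) : False := by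
  have hq : (Walk.cons ha p).IsPath := (Walk.cons_isPath_iff _ _).2 ⟨hp.1, hh⟩
  have := hp.2 _ _ _ hq
  simp [Walk.length_cons] at this

lemma LPaux_notAdjEnd (hp : IsLongestPath G p) {h : V} (hh : h ∉ p.support)
    (ha : G.Adj h y) : False := by
  have hq : (Walk.cons ha p.reverse).IsPath := by
    refine (Walk.cons_isPath_iff _ _).2 ⟨hp.1.reverse, ?_⟩
    simpa [Walk.support_reverse] using hh
  have := hp.2 _ _ _ hq
  simp [Walk.length_cons, Walk.length_reverse] at this

/-- inner walk in a connected component off the path -/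
lemma LPaux_exists_inner {a b : {v : V | v ∉ p.support}}
    (hab : (G.induce {v : V | v ∉ p.support}).connectedComponentMk a
      = (G.induce {v : V | v ∉ p.support}).connectedComponentMk b) :
    ∃ w : G.Walk ↑a ↑b, w.IsPath ∧ ∀ v ∈ w.support, v ∉ p.support := by
  classical
  have hr := SimpleGraph.ConnectedComponent.exact hab
  obtain ⟨w0⟩ := hr
  set G' := G.induce {v : V | v ∉ p.support}
  let f : G' →g G := ⟨Subtype.val, fun hadj => hadj⟩
  refine ⟨(w0.toPath : G'.Walk a b).map f, ?_, ?_⟩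
  · exact Walk.map_isPath_of_injective Subtype.val_injective w0.toPath.2
  · intro v hv
    rw [Walk.support_map] at hv
    obtain ⟨u, _, rfl⟩ := List.mem_map.1 hv
    exact u.2

lemma LPaux_split_facts (hp : p.IsPath) (hs : s ∈ p.support) (hsy : s ≠ y) :
    p.support = (p.takeUntil s hs).support ++ (p.dropUntil s hs).tail.support ∧
    p.length = (p.takeUntil s hs).length + 1 + (p.dropUntil s hs).tail.length := by
  have hnil : ¬(p.dropUntil s hs).Nil := Walk.not_nil_of_ne hsy
  constructor
  · conv_lhs => rw [← Walk.take_spec p hs]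
    rw [Walk.support_append, Walk.support_tail_of_not_nil _ hnil]
  · conv_lhs => rw [← Walk.take_spec p hs]
    rw [Walk.length_append]
    have := Walk.length_tail_add_one hnil
    omega

lemma LPaux_tail_isPath (hp : p.IsPath) (hxy : x ≠ y) : p.tail.IsPath := by
  rw [Walk.isPath_def, Walk.support_tail_of_not_nil _ (Walk.not_nil_of_ne hxy)]
  exact hp.support_nodup.sublist (List.tail_sublist _)

lemma LPaux_mem_tail_dropUntil_or (hp : p.IsPath) (hs : s ∈ p.support) {s' : V}
    (hs' : s' ∈ p.support) (hne : s ≠ s') (hsy : s ≠ y) (hs'y : s' ≠ y) :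
    s' ∈ (p.dropUntil s hs).tail.support ∨ s ∈ (p.dropUntil s' hs').tail.support := by
  by_contra hcon
  push_neg at hcon
  obtain ⟨h1, h2⟩ := hcon
  have hsp1 := (LPaux_split_facts hp hs hsy).1
  have hsp2 := (LPaux_split_facts hp hs' hs'y).1
  have hm1 : s' ∈ (p.takeUntil s hs).support := by
    have h3 := hs'
    rw [hsp1, List.mem_append] at h3
    tauto
  have hm2 : s ∈ (p.takeUntil s' hs').support := by
    have h3 := hs
    rw [hsp2, List.mem_append] at h3
    tauto
  have hpre1 : (p.takeUntil s hs).support <+: p.support := ⟨_, hsp1.symm⟩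
  have hpre2 : (p.takeUntil s' hs').support <+: p.support := ⟨_, hsp2.symm⟩
  have hnd := hp.support_nodup
  apply hne
  rcases List.prefix_or_prefix_of_prefix hpre1 hpre2 with hpp | hpp
  · have heq := LPaux_prefix_eq_of_getLast_mem hpp (hnd.sublist hpre2.sublist)
      (Walk.support_ne_nil _) (by rw [Walk.getLast_support]; exact hm1)
    have e1 : (p.takeUntil s hs).support.getLast? = some s := by
      rw [List.getLast?_eq_getLast (Walk.support_ne_nil _), Walk.getLast_support]
    have e2 : (p.takeUntil s' hs').support.getLast? = some s' := by
      rw [List.getLast?_eq_getLast (Walk.support_ne_nil _), Walk.getLast_support]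
    rw [heq, e2] at e1
    exact (Option.some_injective _ e1).symm
  · have heq := LPaux_prefix_eq_of_getLast_mem hpp (hnd.sublist hpre1.sublist)
      (Walk.support_ne_nil _) (by rw [Walk.getLast_support]; exact hm2)
    have e1 : (p.takeUntil s hs).support.getLast? = some s := by
      rw [List.getLast?_eq_getLast (Walk.support_ne_nil _), Walk.getLast_support]
    have e2 : (p.takeUntil s' hs').support.getLast? = some s' := by
      rw [List.getLast?_eq_getLast (Walk.support_ne_nil _), Walk.getLast_support]
    rw [heq, e1] at e2
    exact Option.some_injective _ e2

/-- S4: the successor of an attachment point is not adjacent to the start of the path. -/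
lemma LPaux_no_adj_start_succ (hp : IsLongestPath G p) (hs : s ∈ p.support) (hsy : s ≠ y)
    {h : V} (hh : h ∉ p.support) (hadj : G.Adj h s)
    (hxt : G.Adj x ((p.dropUntil s hs).getVert 1)) : False := by
  obtain ⟨hsupp, hlen⟩ := LPaux_split_facts hp.1 hs hsy
  set tk := p.takeUntil s hs with htk
  set e := (p.dropUntil s hs).tail with he
  have hnodup : (tk.support ++ e.support).Nodup := hsupp ▸ hp.1.support_nodup
  have hsub : ∀ v, v ∈ tk.support ∨ v ∈ e.support → v ∈ p.support := by
    intro v hv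
    rw [hsupp, List.mem_append]; exact hv
  let q : G.Walk h y := Walk.cons hadj (tk.reverse.append (Walk.cons hxt e))
  have hqsupp : q.support = h :: (tk.support.reverse ++ e.support) := by
    simp [q, Walk.support_cons, Walk.support_append, Walk.support_reverse]
  have hqpath : q.IsPath := by
    rw [Walk.isPath_def, hqsupp, List.nodup_cons]
    constructor
    · intro hmem
      rcases List.mem_append.1 hmem with hm | hm
      · exact hh (hsub h (Or.inl (List.mem_reverse.1 hm)))
      · exact hh (hsub h (Or.inr hm))
    · rw [List.nodup_append] at hnodup ⊢
      exact ⟨List.nodup_reverse.2 hnodup.1, hnodup.2.1,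
        fun a ha b hb => hnodup.2.2 a (List.mem_reverse.1 ha) b hb⟩
  have hql : q.length = p.length + 1 := by
    simp only [q, Walk.length_cons, Walk.length_append, Walk.length_reverse]
    omega
  have := hp.2 _ _ q hqpath
  omega

/-- S2: the successor of an attachment point has no neighbor in the component. -/
lemma LPaux_no_adj_comp_succ (hp : IsLongestPath G p) (hs : s ∈ p.support) (hsy : s ≠ y)
    {h w : V} (hadj : G.Adj h s) (inner : G.Walk h w) (hin : inner.IsPath)
    (hinO : ∀ v ∈ inner.support, v ∉ p.support)
    (hwt : G.Adj w ((p.dropUntil s hs).getVert 1)) : False := by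
  obtain ⟨hsupp, hlen⟩ := LPaux_split_facts hp.1 hs hsy
  set tk := p.takeUntil s hs with htk
  set e := (p.dropUntil s hs).tail with he
  have hnodup : (tk.support ++ e.support).Nodup := hsupp ▸ hp.1.support_nodup
  have hsub : ∀ v, v ∈ tk.support ∨ v ∈ e.support → v ∈ p.support := by
    intro v hv
    rw [hsupp, List.mem_append]; exact hv
  let q : G.Walk x y := tk.append (Walk.cons hadj.symm (inner.append (Walk.cons hwt e)))
  have hqsupp : q.support = tk.support ++ (inner.support ++ e.support) := by
    simp [q, Walk.support_cons, Walk.support_append]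
  have hqpath : q.IsPath := by
    rw [Walk.isPath_def, hqsupp]
    rw [List.nodup_append] at hnodup
    rw [List.nodup_append, List.nodup_append]
    refine ⟨hnodup.1, ⟨hin.support_nodup, hnodup.2.1, ?_⟩, ?_⟩
    · intro a ha b hb hab
      rw [← hab] at hb
      exact hinO a ha (hsub a (Or.inr hb))
    · intro a ha b hb hab
      rw [← hab] at hb
      rcases List.mem_append.1 hb with hm | hm
      · exact hinO a hm (hsub a (Or.inl ha))
      · exact hnodup.2.2 a ha a hm rfl
  have hql : q.length = p.length + 1 + inner.length := by
    simp only [q, Walk.length_cons, Walk.length_append]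
    omega
  have := hp.2 _ _ q hqpath
  omega

/-- S3: successors of two attachment points are non-adjacent (ordered version). -/
lemma LPaux_no_adj_succ_succ (hp : IsLongestPath G p) (hs : s ∈ p.support) (hsy : s ≠ y)
    {s' : V} (hs' : s' ∈ (p.dropUntil s hs).tail.support) (hs'y : s' ≠ y)
    {h h' : V} (hadjh : G.Adj h s) (hadjh' : G.Adj h' s')
    (inner : G.Walk h h') (hin : inner.IsPath)
    (hinO : ∀ v ∈ inner.support, v ∉ p.support)
    (hadj : G.Adj ((p.dropUntil s hs).getVert 1)
      (((p.dropUntil s hs).tail.dropUntil s' hs').getVert 1)) : False := by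
  obtain ⟨hsupp, hlen⟩ := LPaux_split_facts hp.1 hs hsy
  set e := (p.dropUntil s hs).tail with hedef
  have hepath : e.IsPath := LPaux_tail_isPath (hp.1.dropUntil hs) hsy
  obtain ⟨hsupp2, hlen2⟩ := LPaux_split_facts hepath hs' hs'y
  set A1 := p.takeUntil s hs with hA1
  set A2 := e.takeUntil s' hs' with hA2
  set A3 := (e.dropUntil s' hs').tail with hA3
  have hsupp3 : p.support = A1.support ++ (A2.support ++ A3.support) := by
    rw [hsupp, hsupp2]
  have hnodup : (A1.support ++ (A2.support ++ A3.support)).Nodup :=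
    hsupp3 ▸ hp.1.support_nodup
  have hsub : ∀ v, v ∈ A1.support ∨ v ∈ A2.support ∨ v ∈ A3.support → v ∈ p.support := by
    intro v hv
    rw [hsupp3, List.mem_append, List.mem_append]
    tauto
  let q : G.Walk x y := A1.append (Walk.cons hadjh.symm (inner.append
    (Walk.cons hadjh' (A2.reverse.append (Walk.cons hadj A3)))))
  have hqsupp : q.support
      = A1.support ++ (inner.support ++ (A2.support.reverse ++ A3.support)) := by
    simp [q, Walk.support_cons, Walk.support_append, Walk.support_reverse]
  have hqpath : q.IsPath := by
    rw [Walk.isPath_def, hqsupp]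
    rw [List.nodup_append, List.nodup_append] at hnodup
    obtain ⟨nA1, ⟨nA2, nA3, d23⟩, d123⟩ := hnodup
    rw [List.nodup_append, List.nodup_append, List.nodup_append]
    refine ⟨nA1, ⟨hin.support_nodup, ⟨List.nodup_reverse.2 nA2, nA3,
      fun a ha b hb => d23 a (List.mem_reverse.1 ha) b hb⟩, ?_⟩, ?_⟩
    · intro a ha b hb hab
      rw [← hab] at hb
      rcases List.mem_append.1 hb with hm | hm
      · exact hinO a ha (hsub a (Or.inr (Or.inl (List.mem_reverse.1 hm))))
      · exact hinO a ha (hsub a (Or.inr (Or.inr hm)))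
    · intro a ha b hb hab
      rw [← hab] at hb
      rcases List.mem_append.1 hb with hm | hm
      · exact hinO a hm (hsub a (Or.inl ha))
      · rcases List.mem_append.1 hm with hm' | hm'
        · exact d123 a ha a (List.mem_append.2 (Or.inl (List.mem_reverse.1 hm'))) rfl
        · exact d123 a ha a (List.mem_append.2 (Or.inr hm')) rfl
  have hql : q.length = p.length + 1 + inner.length := by
    simp only [q, Walk.length_cons, Walk.length_append, Walk.length_reverse]
    omega
  have := hp.2 _ _ q hqpath
  omega

end LPaux

/-- If `G` is `k`-connected with `α(G) ≤ k + 2`, `P` is a longest path in `G`, and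
`H` is a component of `G - V(P)`, then `H` is a complete graph and `H` has exactly
`k` attachment points on `P`. -/
theorem component_complete_and_k_attachment_points
    {V : Type} [Fintype V] (G : SimpleGraph V) (k : ℕ)
    (hconn : KConnected k G)
    (hα : ∀ s : Finset V, (∀ a ∈ s, ∀ b ∈ s, a ≠ b → ¬ G.Adj a b) → s.card ≤ k + 2)
    {x y : V} (p : G.Walk x y) (hp : IsLongestPath G p)
    (C : (G.induce {v : V | v ∉ p.support}).ConnectedComponent) :
    (∀ h h' : {v : V | v ∉ p.support},
      (G.induce {v : V | v ∉ p.support}).connectedComponentMk h = C →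
      (G.induce {v : V | v ∉ p.support}).connectedComponentMk h' = C →
      h ≠ h' → G.Adj ↑h ↑h') ∧
    (attachPoints G p C).ncard = k := by
  classical
  set A := attachPoints G p C with hAdef
  have hAmem : ∀ s, s ∈ A ↔ (s ∈ p.support ∧ ∃ h : {v : V | v ∉ p.support},
      (G.induce {v : V | v ∉ p.support}).connectedComponentMk h = C ∧ G.Adj ↑h s) := by
    intro s; rfl
  have hAsupp : ∀ s ∈ A, s ∈ p.support := fun s hs => ((hAmem s).1 hs).1
  have hAy : ∀ s ∈ A, s ≠ y := by
    intro s hsA he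
    obtain ⟨_, h, _, hadj⟩ := (hAmem _).1 hsA
    exact LPaux_notAdjEnd hp h.2 (he ▸ hadj)
  have hAx : x ∉ A := by
    intro hxA
    obtain ⟨_, h, _, hadj⟩ := (hAmem _).1 hxA
    exact LPaux_notAdjStart hp h.2 hadj
  -- the successor function
  set f : V → V := fun s => if hs : s ∈ p.support then (p.dropUntil s hs).getVert 1 else s
    with hfdef
  have hfA : ∀ s (hs : s ∈ p.support), f s = (p.dropUntil s hs).getVert 1 := by
    intro s hs
    simp only [hfdef, dif_pos hs]
  have hdart : ∀ s ∈ A, ∃ d ∈ p.darts, d.fst = s ∧ d.snd = f s := by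
    intro s hsA
    obtain ⟨d, hd, h1, h2⟩ := LPaux_exists_first_dart (hAsupp s hsA) (hAy s hsA)
    exact ⟨d, hd, h1, by rw [hfA s (hAsupp s hsA)]; exact h2⟩
  have hfmem : ∀ s ∈ A, f s ∈ p.support.tail := by
    intro s hsA
    obtain ⟨d, hd, _, h2⟩ := hdart s hsA
    rw [← Walk.map_snd_darts]
    exact List.mem_map.2 ⟨d, hd, h2⟩
  have hfsupp : ∀ s ∈ A, f s ∈ p.support := fun s hs => List.mem_of_mem_tail (hfmem s hs)
  have hxtail : x ∉ p.support.tail := by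
    have hnd := hp.1.support_nodup
    rw [Walk.support_eq_cons] at hnd
    exact (List.nodup_cons.1 hnd).1
  have hfnex : ∀ s ∈ A, f s ≠ x := by
    intro s hsA he
    have hm := hfmem s hsA
    rw [he] at hm
    exact hxtail hm
  have hfinj : ∀ s ∈ A, ∀ s' ∈ A, f s = f s' → s = s' := by
    intro s hsA s' hs'A hff
    obtain ⟨d, hd, h1, h2⟩ := hdart s hsA
    obtain ⟨d', hd', h1', h2'⟩ := hdart s' hs'A
    have := LPaux_dart_eq_of_snd_eq hp.1 hd hd' (by rw [h2, h2', hff])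
    rw [← h1, ← h1', this]
  -- nonadjacency facts
  have hNCx : ∀ w : {v : V | v ∉ p.support}, ¬ G.Adj ↑w x :=
    fun w hX => LPaux_notAdjStart hp w.2 hX
  have hNx : ∀ s ∈ A, ¬ G.Adj x (f s) := by
    intro s hsA hX
    have hsy := hAy s hsA
    obtain ⟨hs1, h, _, hadj⟩ := (hAmem s).1 hsA
    rw [hfA s hs1] at hX
    exact LPaux_no_adj_start_succ hp hs1 hsy h.2 hadj hX
  have hNC : ∀ s ∈ A, ∀ w : {v : V | v ∉ p.support},
      (G.induce {v : V | v ∉ p.support}).connectedComponentMk w = C →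
      ¬ G.Adj ↑w (f s) := by
    intro s hsA w hw hX
    have hsy := hAy s hsA
    obtain ⟨hs1, h, hC, hadjh⟩ := (hAmem s).1 hsA
    obtain ⟨inn, hin, hinO⟩ := LPaux_exists_inner (p := p) (hC.trans hw.symm)
    rw [hfA s hs1] at hX
    exact LPaux_no_adj_comp_succ hp hs1 hsy hadjh inn hin hinO hX
  have hNff : ∀ s ∈ A, ∀ s' ∈ A, s ≠ s' → ¬ G.Adj (f s) (f s') := by
    have key : ∀ s ∈ A, ∀ s' ∈ A, ∀ (hs1 : s ∈ p.support),
        ∀ hmem : s' ∈ (p.dropUntil s hs1).tail.support, ¬ G.Adj (f s) (f s') := by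
      intro s hsA s' hs'A hs1 hmem hX
      have hsy := hAy s hsA
      have hs'y := hAy s' hs'A
      obtain ⟨_, h, hC, hadjh⟩ := (hAmem s).1 hsA
      obtain ⟨hs'1, h', hC', hadjh'⟩ := (hAmem s').1 hs'A
      obtain ⟨inn, hin, hinO⟩ := LPaux_exists_inner (p := p) (hC.trans hC'.symm)
      -- identify f s' with the successor within the tail
      have hnil' : ¬((p.dropUntil s hs1).tail.dropUntil s' hmem).Nil :=
        Walk.not_nil_of_ne hs'y
      have hnil : ¬(p.dropUntil s hs1).Nil := Walk.not_nil_of_ne hsy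
      have hd1 : ∃ d ∈ p.darts, d.fst = s' ∧
          d.snd = ((p.dropUntil s hs1).tail.dropUntil s' hmem).getVert 1 := by
        refine ⟨((p.dropUntil s hs1).tail.dropUntil s' hmem).firstDart hnil', ?_, rfl, rfl⟩
        apply Walk.darts_dropUntil_subset p hs1
        apply LPaux_darts_tail_subset _ hnil
        exact Walk.darts_dropUntil_subset _ hmem (LPaux_firstDart_mem_darts _ hnil')
      have heq : ((p.dropUntil s hs1).tail.dropUntil s' hmem).getVert 1 = f s' := by
        obtain ⟨d, hd, hdf, hds⟩ := hd1
        obtain ⟨d', hd', hdf', hds'⟩ := hdart s' hs'A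
        have := LPaux_dart_eq_of_fst_eq hp.1 hd hd' (hdf.trans hdf'.symm)
        rw [← hds, this, hds']
      rw [hfA s hs1, ← heq] at hX
      exact LPaux_no_adj_succ_succ hp hs1 hsy hmem hs'y hadjh hadjh' inn hin hinO hX
    intro s hsA s' hs'A hne hX
    rcases LPaux_mem_tail_dropUntil_or hp.1 (hAsupp s hsA) (hAsupp s' hs'A) hne
        (hAy s hsA) (hAy s' hs'A) with hm | hm
    · exact key s hsA s' hs'A _ hm hX
    · exact key s' hs'A s hsA _ hm hX.symm
  -- a representative of the component
  obtain ⟨u0, hu0⟩ := Quot.exists_rep C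
  have hAfin : A.Finite := Set.toFinite A
  -- Step A: at least k attachment points
  have hk_le : k ≤ A.ncard := by
    by_contra hlt
    push_neg at hlt
    set S : Finset V := hAfin.toFinset with hS
    have hScard : S.card < k := by
      rw [← Set.ncard_eq_toFinset_card A hAfin]
      exact hlt
    have hconn' := hconn.2 S hScard
    have hmemS : ∀ v, v ∈ S ↔ v ∈ A := fun v => hAfin.mem_toFinset
    have hu0S : (↑u0 : V) ∈ ((↑S : Set V)ᶜ : Set V) := by
      intro hmem
      exact u0.2 (hAsupp _ ((hmemS _).1 hmem))
    have hxS : x ∈ ((↑S : Set V)ᶜ : Set V) := by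
      intro hmem
      exact hAx ((hmemS _).1 hmem)
    obtain ⟨w⟩ := hconn'.preconnected ⟨↑u0, hu0S⟩ ⟨x, hxS⟩
    have key : ∀ (a b : ((↑S : Set V)ᶜ : Set V)) (w : (G.induce ((↑S : Set V)ᶜ)).Walk a b)
        (ha : (a : V) ∉ p.support),
        (G.induce {v : V | v ∉ p.support}).connectedComponentMk ⟨a, ha⟩ = C →
        (b : V) ∈ p.support → False := by
      intro a b w
      induction w with
      | nil =>
        intro ha _ hb
        exact ha hb
      | @cons a' b' c' hab w ih =>
        intro ha hC hb
        by_cases hvb : (↑b' : V) ∈ p.support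
        · have hAb : (↑b' : V) ∈ A := (hAmem _).2 ⟨hvb, ⟨↑a', ha⟩, hC, hab⟩
          exact b'.2 ((hmemS _).2 hAb)
        · apply ih hvb ?_ hb
          have hadj' : (G.induce {v : V | v ∉ p.support}).Adj ⟨↑a', ha⟩ ⟨↑b', hvb⟩ := hab
          rw [← SimpleGraph.ConnectedComponent.connectedComponentMk_eq_of_adj hadj']
          exact hC
    refine key _ _ w u0.2 ?_ p.start_mem_support
    have : (⟨↑u0, u0.2⟩ : {v : V | v ∉ p.support}) = u0 := Subtype.ext rfl
    rw [this]
    exact hu0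
  -- the image finset
  set Af : Finset V := hAfin.toFinset with hAf
  have hmemAf : ∀ v, v ∈ Af ↔ v ∈ A := fun v => hAfin.mem_toFinset
  have hAcard : Af.card = A.ncard := (Set.ncard_eq_toFinset_card A hAfin).symm
  set F : Finset V := Af.image f with hF
  have hFcard : F.card = A.ncard := by
    rw [hF, Finset.card_image_of_injOn, hAcard]
    intro a ha b hb hab
    exact hfinj a ((hmemAf a).1 ha) b ((hmemAf b).1 hb) hab
  have hmemF : ∀ v ∈ F, ∃ s ∈ A, f s = v := by
    intro v hv
    obtain ⟨s, hs, hfs⟩ := Finset.mem_image.1 hv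
    exact ⟨s, (hmemAf s).1 hs, hfs⟩
  have hxF : x ∉ F := by
    intro hx
    obtain ⟨s, hsA, hfs⟩ := hmemF x hx
    exact hfnex s hsA hfs
  have hoffF : ∀ w : {v : V | v ∉ p.support}, (↑w : V) ∉ F := by
    intro w hw
    obtain ⟨s, hsA, hfs⟩ := hmemF _ hw
    exact w.2 (hfs ▸ hfsupp s hsA)
  have hxoff : ∀ w : {v : V | v ∉ p.support}, x ≠ ↑w := by
    intro w he
    exact w.2 (he ▸ p.start_mem_support)
  -- Step B: at most k attachment points
  have hub : A.ncard ≤ k := by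
    set T : Finset V := insert x (insert (↑u0 : V) F) with hT
    have hTcard : T.card = A.ncard + 2 := by
      rw [hT, Finset.card_insert_of_notMem, Finset.card_insert_of_notMem (hoffF u0), hFcard]
      intro hmem
      rcases Finset.mem_insert.1 hmem with he | hmem'
      · exact hxoff u0 he
      · exact hxF hmem'
    have hind : ∀ a ∈ T, ∀ b ∈ T, a ≠ b → ¬ G.Adj a b := by
      intro a ha b hb hne hadj
      rcases Finset.mem_insert.1 ha with rfl | ha'
      · rcases Finset.mem_insert.1 hb with rfl | hb'
        · exact hne rfl
        rcases Finset.mem_insert.1 hb' with rfl | hb''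
        · exact hNCx u0 hadj.symm
        · obtain ⟨s, hsA, rfl⟩ := hmemF _ hb''
          exact hNx s hsA hadj
      rcases Finset.mem_insert.1 ha' with rfl | ha''
      · rcases Finset.mem_insert.1 hb with rfl | hb'
        · exact hNCx u0 hadj
        rcases Finset.mem_insert.1 hb' with rfl | hb''
        · exact hne rfl
        · obtain ⟨s, hsA, rfl⟩ := hmemF _ hb''
          exact hNC s hsA u0 hu0 hadj
      · obtain ⟨s, hsA, rfl⟩ := hmemF _ ha''
        rcases Finset.mem_insert.1 hb with rfl | hb'
        · exact hNx s hsA hadj.symm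
        rcases Finset.mem_insert.1 hb' with rfl | hb''
        · exact hNC s hsA u0 hu0 hadj.symm
        · obtain ⟨s', hs'A, rfl⟩ := hmemF _ hb''
          exact hNff s hsA s' hs'A (fun he => hne (he ▸ rfl)) hadj
    have := hα T hind
    omega
  have hAk : A.ncard = k := le_antisymm hub hk_le
  refine ⟨?_, hAk⟩
  -- completeness of the component
  intro h h' hC hC' hne
  by_contra hnadj
  set T : Finset V := insert (↑h : V) (insert (↑h' : V) (insert x F)) with hT
  have hhne : (↑h : V) ≠ ↑h' := fun he => hne (Subtype.ext he)
  have hTcard : T.card = A.ncard + 3 := by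
    rw [hT, Finset.card_insert_of_notMem, Finset.card_insert_of_notMem,
      Finset.card_insert_of_notMem hxF, hFcard]
    · intro hmem
      rcases Finset.mem_insert.1 hmem with he | hmem'
      · exact hxoff h' he.symm
      · exact hoffF h' hmem'
    · intro hmem
      rcases Finset.mem_insert.1 hmem with he | hmem'
      · exact hhne he
      rcases Finset.mem_insert.1 hmem' with he | hmem''
      · exact hxoff h he.symm
      · exact hoffF h hmem''
  have hind : ∀ a ∈ T, ∀ b ∈ T, a ≠ b → ¬ G.Adj a b := by
    intro a ha b hb hne2 hadj
    rcases Finset.mem_insert.1 ha with rfl | ha'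
    · rcases Finset.mem_insert.1 hb with rfl | hb'
      · exact hne2 rfl
      rcases Finset.mem_insert.1 hb' with rfl | hb''
      · exact hnadj hadj
      rcases Finset.mem_insert.1 hb'' with rfl | hb3
      · exact hNCx h hadj
      · obtain ⟨s, hsA, rfl⟩ := hmemF _ hb3
        exact hNC s hsA h hC hadj
    rcases Finset.mem_insert.1 ha' with rfl | ha''
    · rcases Finset.mem_insert.1 hb with rfl | hb'
      · exact hnadj hadj.symm
      rcases Finset.mem_insert.1 hb' with rfl | hb''
      · exact hne2 rfl
      rcases Finset.mem_insert.1 hb'' with rfl | hb3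
      · exact hNCx h' hadj
      · obtain ⟨s, hsA, rfl⟩ := hmemF _ hb3
        exact hNC s hsA h' hC' hadj
    rcases Finset.mem_insert.1 ha'' with rfl | ha3
    · rcases Finset.mem_insert.1 hb with rfl | hb'
      · exact hNCx h hadj.symm
      rcases Finset.mem_insert.1 hb' with rfl | hb''
      · exact hNCx h' hadj.symm
      rcases Finset.mem_insert.1 hb'' with rfl | hb3
      · exact hne2 rfl
      · obtain ⟨s, hsA, rfl⟩ := hmemF _ hb3
        exact hNx s hsA hadj
    · obtain ⟨s, hsA, rfl⟩ := hmemF _ ha3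
      rcases Finset.mem_insert.1 hb with rfl | hb'
      · exact hNC s hsA h hC hadj.symm
      rcases Finset.mem_insert.1 hb' with rfl | hb''
      · exact hNC s hsA h' hC' hadj.symm
      rcases Finset.mem_insert.1 hb'' with rfl | hb3
      · exact hNx s hsA hadj.symm
      · obtain ⟨s', hs'A, rfl⟩ := hmemF _ hb3
        exact hNff s hsA s' hs'A (fun he => hne2 (he ▸ rfl)) hadj
  have := hα T hind
  omega
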